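/- Suppose m is a positive integer, g : ℝ^m → [0,∞] is an arbitrary function, and 0 < l < ∞. Then for Lebesgue almost all a ∈ ℝ^m, the quantity limsup_{r→0+} r^{−l} · sup{ g(x) : x ∈ B(a,r) } equals either 0 or ∞. -/

import Mathlib

open Metric Set Filter MeasureTheory
open scoped Topology ENNReal

noncomputable section

namespace Stmt7Aux

variable {m : ℕ}

/-- The sup of `g` over the open ball `B(a,r)`. -/
abbrev S (g : EuclideanSpace ℝ (Fin m) → ℝ≥0∞) (a : EuclideanSpace ℝ (Fin m)) (r : ℝ) : ℝ≥0∞ :=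
  ⨆ x ∈ ball a r, g x

lemma isOpen_S_gt (g : EuclideanSpace ℝ (Fin m) → ℝ≥0∞) (r : ℝ) (t : ℝ≥0∞) :
    IsOpen {a : EuclideanSpace ℝ (Fin m) | t < S g a r} := by
  have : {a : EuclideanSpace ℝ (Fin m) | t < S g a r}
      = ⋃ x ∈ {x | t < g x}, ball x r := by
    ext a
    simp only [S, mem_setOf_eq, lt_iSup_iff, mem_iUnion, mem_ball, exists_prop]
    constructor
    · rintro ⟨x, hx, hgx⟩
      exact ⟨x, hgx, by rwa [dist_comm]⟩
    · rintro ⟨x, hgx, hx⟩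
      exact ⟨x, by rwa [dist_comm], hgx⟩
  rw [this]
  exact isOpen_biUnion fun x _ => isOpen_ball

/-- The set of points `a` such that `S g a r ≤ M r^l` for all `0 < r < 1/(k+1)`. -/
def A (g : EuclideanSpace ℝ (Fin m) → ℝ≥0∞) (l : ℝ) (M k : ℕ) :
    Set (EuclideanSpace ℝ (Fin m)) :=
  {a | ∀ r : ℝ, 0 < r → r < 1 / (k + 1) →
    S g a r ≤ (M : ℝ≥0∞) * (ENNReal.ofReal r) ^ l}

lemma measurableSet_A (g : EuclideanSpace ℝ (Fin m) → ℝ≥0∞) (l : ℝ) (M k : ℕ) :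
    MeasurableSet (A g l M k) := by
  have : A g l M k = ⋂ r : ℝ, {a | 0 < r → r < 1 / (k + 1) →
      S g a r ≤ (M : ℝ≥0∞) * (ENNReal.ofReal r) ^ l} := by
    ext a; simp [A, mem_iInter]
  rw [this]
  refine (isClosed_iInter fun r => ?_).measurableSet
  by_cases h : 0 < r ∧ r < 1 / (k + 1)
  · have : {a : EuclideanSpace ℝ (Fin m) | 0 < r → r < 1 / (k + 1) →
        S g a r ≤ (M : ℝ≥0∞) * (ENNReal.ofReal r) ^ l}
        = {a | (M : ℝ≥0∞) * (ENNReal.ofReal r) ^ l < S g a r}ᶜ := by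
      ext a
      simp only [mem_setOf_eq, mem_compl_iff, not_lt]
      exact ⟨fun H => H h.1 h.2, fun H _ _ => H⟩
    rw [this]
    exact (isOpen_S_gt g r _).isClosed_compl
  · have : {a : EuclideanSpace ℝ (Fin m) | 0 < r → r < 1 / (k + 1) →
        S g a r ≤ (M : ℝ≥0∞) * (ENNReal.ofReal r) ^ l} = univ := by
      ext a
      simp only [mem_setOf_eq, mem_univ, iff_true]
      intro h1 h2
      exact absurd ⟨h1, h2⟩ h
    rw [this]
    exact isClosed_univ

lemma le_of_rpow_neg_mul_le {x s t : ℝ≥0∞} {l : ℝ} (hx0 : x ≠ 0) (hxt : x ≠ ⊤)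
    (h : x ^ (-l) * s ≤ t) : s ≤ t * x ^ l := by
  calc s = (x ^ l * x ^ (-l)) * s := by
        rw [← ENNReal.rpow_add _ _ hx0 hxt, add_neg_cancel, ENNReal.rpow_zero, one_mul]
    _ = x ^ l * (x ^ (-l) * s) := by rw [mul_assoc]
    _ ≤ x ^ l * t := mul_le_mul_right h _
    _ = t * x ^ l := mul_comm _ _


lemma tendsto_two_mul : Tendsto (fun r : ℝ => 2 * r) (𝓝[>] (0:ℝ)) (𝓝[>] (0:ℝ)) := by
  apply tendsto_nhdsWithin_of_tendsto_nhds_of_eventually_within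
  · have h1 : Tendsto (fun r : ℝ => 2 * r) (𝓝 (0:ℝ)) (𝓝 (2 * 0)) :=
      (continuous_const.mul continuous_id).tendsto 0
    rw [mul_zero] at h1
    exact h1.mono_left nhdsWithin_le_nhds
  · filter_upwards [self_mem_nhdsWithin] with r (hr : 0 < r)
    exact mul_pos two_pos hr

lemma limsup_eq_zero (hm : 0 < m) (g : EuclideanSpace ℝ (Fin m) → ℝ≥0∞) {l : ℝ} (hl : 0 < l)
    (M k : ℕ) (a : EuclideanSpace ℝ (Fin m)) (haA : a ∈ A g l M k)
    (hd : Tendsto (fun s => volume (A g l M k ∩ closedBall a s) / volume (closedBall a s))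
      (𝓝[>] (0:ℝ)) (𝓝 1)) :
    limsup (fun r : ℝ => (ENNReal.ofReal r) ^ (-l) * S g a r) (𝓝[>] (0:ℝ)) = 0 := by
  have key : ∀ ε : ℝ, 0 < ε → ε < 1 →
      limsup (fun r : ℝ => (ENNReal.ofReal r) ^ (-l) * S g a r) (𝓝[>] (0:ℝ))
        ≤ (M : ℝ≥0∞) * ENNReal.ofReal ε ^ l := by
    intro ε hε0 hε1
    set c : ℝ≥0∞ := ENNReal.ofReal ((ε/2) ^ m) with hc
    have hc0 : c ≠ 0 := by
      simp only [hc, ne_eq, ENNReal.ofReal_eq_zero, not_le]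
      positivity
    have hlt : (1:ℝ≥0∞) - c < 1 := ENNReal.sub_lt_self ENNReal.one_ne_top one_ne_zero hc0
    have hev1 : ∀ᶠ s in 𝓝[>] (0:ℝ),
        1 - c < volume (A g l M k ∩ closedBall a s) / volume (closedBall a s) :=
      hd (Ioi_mem_nhds hlt)
    have hev2 : ∀ᶠ r in 𝓝[>] (0:ℝ),
        1 - c < volume (A g l M k ∩ closedBall a (2*r)) / volume (closedBall a (2*r)) :=
      tendsto_two_mul.eventually hev1
    have hev3 : ∀ᶠ r : ℝ in 𝓝[>] (0:ℝ), 0 < r := self_mem_nhdsWithin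
    have hev4 : ∀ᶠ r : ℝ in 𝓝[>] (0:ℝ), r < 1/(k+1) :=
      eventually_nhdsWithin_of_eventually_nhds (gt_mem_nhds (by positivity))
    refine limsup_le_of_le (by isBoundedDefault) ?_
    filter_upwards [hev2, hev3, hev4] with r hr2 hr0 hrk
    have hεr : 0 < ε * r := mul_pos hε0 hr0
    have hstep : S g a r ≤ (M : ℝ≥0∞) * ENNReal.ofReal (ε * r) ^ l := by
      refine iSup₂_le fun x hx => ?_
      have hAx : (A g l M k ∩ ball x (ε * r)).Nonempty := by
        by_contra hemp
        rw [not_nonempty_iff_eq_empty] at hemp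
        have hsub : A g l M k ∩ closedBall a (2*r) ⊆ closedBall a (2*r) \ ball x (ε*r) := by
          intro y hy
          refine ⟨hy.2, fun hy2 => ?_⟩
          have : y ∈ A g l M k ∩ ball x (ε*r) := ⟨hy.1, hy2⟩
          rw [hemp] at this
          exact this
        have hball_sub : ball x (ε*r) ⊆ closedBall a (2*r) := by
          intro y hy
          have hxa : dist x a < r := mem_ball.mp hx
          have hyx : dist y x < ε * r := mem_ball.mp hy
          have hya : dist y a < ε*r + r :=
            lt_of_le_of_lt (dist_triangle y x a) (add_lt_add hyx hxa)
          refine mem_closedBall.mpr (hya.le.trans ?_)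
          nlinarith
        have h2r : (0:ℝ) < 2*r := by linarith
        have hfin : volume (closedBall a (2*r)) ≠ ⊤ := measure_closedBall_lt_top.ne
        have hpos : volume (closedBall a (2*r)) ≠ 0 := (measure_closedBall_pos _ _ h2r).ne'
        have hvol : volume (ball x (ε*r)) = c * volume (closedBall a (2*r)) := by
          rw [Measure.addHaar_ball_of_pos _ x hεr, Measure.addHaar_closedBall _ a h2r.le,
            finrank_euclideanSpace_fin, ← mul_assoc, ← ENNReal.ofReal_mul (by positivity)]
          congr 2
          rw [← mul_pow]
          ring_nf
        have hkey : volume (A g l M k ∩ closedBall a (2*r))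
            ≤ volume (closedBall a (2*r)) - volume (ball x (ε*r)) := by
          refine le_trans (measure_mono hsub) ?_
          rw [measure_diff hball_sub measurableSet_ball.nullMeasurableSet
            (ne_top_of_le_ne_top hfin (measure_mono hball_sub))]
        have hcon : volume (A g l M k ∩ closedBall a (2*r)) / volume (closedBall a (2*r))
            ≤ 1 - c := by
          rw [hvol] at hkey
          have heq : volume (closedBall a (2*r)) - c * volume (closedBall a (2*r))
              = (1 - c) * volume (closedBall a (2*r)) := by
            rw [ENNReal.sub_mul (fun _ _ => hfin), one_mul]
          rw [heq] at hkey
          calc volume (A g l M k ∩ closedBall a (2*r)) / volume (closedBall a (2*r))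
              ≤ (1 - c) * volume (closedBall a (2*r)) / volume (closedBall a (2*r)) :=
                ENNReal.div_le_div_right hkey _
            _ = 1 - c := by rw [mul_div_assoc, ENNReal.div_self hpos hfin, mul_one]
        exact absurd hcon (not_le.mpr hr2)
      obtain ⟨b, hbA, hbx⟩ := hAx
      have hgx : g x ≤ S g b (ε*r) := by
        have hxb : x ∈ ball b (ε*r) := mem_ball.mpr (by rw [dist_comm]; exact mem_ball.mp hbx)
        exact le_biSup g hxb
      refine hgx.trans (hbA (ε*r) hεr ?_)
      calc ε*r < 1*r := by nlinarith
        _ = r := one_mul r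
        _ < 1/(k+1) := hrk
    have hx0 : ENNReal.ofReal r ≠ 0 := (ENNReal.ofReal_pos.mpr hr0).ne'
    have hxt : ENNReal.ofReal r ≠ ⊤ := ENNReal.ofReal_ne_top
    calc ENNReal.ofReal r ^ (-l) * S g a r
        ≤ ENNReal.ofReal r ^ (-l) *
          ((M:ℝ≥0∞) * (ENNReal.ofReal ε ^ l * ENNReal.ofReal r ^ l)) := by
          refine mul_le_mul_right (hstep.trans_eq ?_) _
          rw [ENNReal.ofReal_mul hε0.le, ENNReal.mul_rpow_of_nonneg _ _ hl.le]
      _ = ((M:ℝ≥0∞) * ENNReal.ofReal ε ^ l) *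
          (ENNReal.ofReal r ^ (-l) * ENNReal.ofReal r ^ l) := by ring
      _ = (M:ℝ≥0∞) * ENNReal.ofReal ε ^ l := by
          rw [← ENNReal.rpow_add _ _ hx0 hxt, neg_add_cancel, ENNReal.rpow_zero, mul_one]
  have htend : Tendsto (fun ε : ℝ => (M:ℝ≥0∞) * ENNReal.ofReal ε ^ l) (𝓝[>] (0:ℝ)) (𝓝 0) := by
    have h0 : Tendsto (fun ε : ℝ => ENNReal.ofReal (ε ^ l)) (𝓝[>] (0:ℝ)) (𝓝 0) := by
      rw [← ENNReal.ofReal_zero]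
      refine (ENNReal.continuous_ofReal.tendsto 0).comp ?_
      have h2 : Tendsto (fun ε : ℝ => ε ^ l) (𝓝 (0:ℝ)) (𝓝 ((0:ℝ) ^ l)) :=
        (Real.continuousAt_rpow_const 0 l (Or.inr hl.le)).tendsto
      rw [Real.zero_rpow hl.ne'] at h2
      exact h2.mono_left nhdsWithin_le_nhds
    have h1 : Tendsto (fun ε : ℝ => (M:ℝ≥0∞) * ENNReal.ofReal (ε ^ l)) (𝓝[>] (0:ℝ))
        (𝓝 ((M:ℝ≥0∞) * 0)) :=
      ENNReal.Tendsto.const_mul h0 (Or.inr (ENNReal.natCast_ne_top M))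
    rw [mul_zero] at h1
    refine h1.congr' ?_
    filter_upwards [self_mem_nhdsWithin] with ε (hε : 0 < ε)
    rw [ENNReal.ofReal_rpow_of_pos hε]
  refine le_antisymm ?_ zero_le
  refine ge_of_tendsto htend ?_
  filter_upwards [self_mem_nhdsWithin,
    eventually_nhdsWithin_of_eventually_nhds (gt_mem_nhds one_pos)] with ε hε0 hε1
  exact key ε hε0 hε1

end Stmt7Aux

open Stmt7Aux

/-- for an arbitrary function `g : ℝ^m → [0,∞]` and `0 < l < ∞`, at Lebesgue
almost every point `a` the quantity `limsup_{r→0+} r^{-l} · sup {g x : x ∈ B(a,r)}`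
equals either `0` or `∞`. -/
theorem stmt_7 (m : ℕ) (hm : 0 < m)
    (g : EuclideanSpace ℝ (Fin m) → ℝ≥0∞) (l : ℝ) (hl : 0 < l) :
    ∀ᵐ a ∂(volume : Measure (EuclideanSpace ℝ (Fin m))),
      Filter.limsup
          (fun r : ℝ => (ENNReal.ofReal r) ^ (-l) * ⨆ x ∈ ball a r, g x)
          (𝓝[>] (0 : ℝ)) = 0 ∨
      Filter.limsup
          (fun r : ℝ => (ENNReal.ofReal r) ^ (-l) * ⨆ x ∈ ball a r, g x)
          (𝓝[>] (0 : ℝ)) = ⊤ := by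
  have hdens : ∀ᵐ a ∂(volume : Measure (EuclideanSpace ℝ (Fin m))),
      ∀ M k : ℕ, a ∈ A g l M k →
        Tendsto (fun s => volume (A g l M k ∩ closedBall a s) / volume (closedBall a s))
          (𝓝[>] (0:ℝ)) (𝓝 1) := by
    rw [ae_all_iff]
    intro M
    rw [ae_all_iff]
    intro k
    filter_upwards [Besicovitch.ae_tendsto_measure_inter_div_of_measurableSet volume
      (measurableSet_A g l M k)] with a ha haA
    simpa [indicator_of_mem haA] using ha
  filter_upwards [hdens] with a ha
  rw [or_iff_not_imp_right]
  intro htop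
  obtain ⟨M, hM⟩ := ENNReal.exists_nat_gt htop
  have hev : ∀ᶠ r in 𝓝[>] (0:ℝ),
      (ENNReal.ofReal r) ^ (-l) * ⨆ x ∈ ball a r, g x < (M : ℝ≥0∞) :=
    Filter.eventually_lt_of_limsup_lt hM
  obtain ⟨u, hu, hsub⟩ := mem_nhdsGT_iff_exists_Ioo_subset.mp hev
  obtain ⟨k, hk⟩ := exists_nat_one_div_lt (mem_Ioi.mp hu)
  have haA : a ∈ A g l M k := by
    intro r hr0 hrk
    have hru : r ∈ Ioo (0:ℝ) u := ⟨hr0, lt_trans hrk (by exact_mod_cast hk)⟩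
    have hlt := hsub hru
    exact le_of_rpow_neg_mul_le (ENNReal.ofReal_pos.mpr hr0).ne' ENNReal.ofReal_ne_top hlt.le
  exact limsup_eq_zero hm g hl M k a haA (ha M k haA)

end
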